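/- arXiv:2503.15142 — 2 statements merged into one kernel-verified Lean document; each statement's English description precedes it below -/
import Mathlib

section
/- With the notation of the varying-domain Brezis–Lieb lemma, the gradients also split: ∫_{Ω_n}|∇u_n|² = ∫_{Ω_n}|∇u_n − ∇u|² + ∫_{Ω_∞}|∇u|² + o(1) as n → ∞. -/
open MeasureTheory Set Filter Topology Metric Bornology

noncomputable section

abbrev E2 := EuclideanSpace ℝ (Fin 2)

/-- Squared L² norm of the gradient of `u` on `Ω`. -/
def grad2 (Ω : Set E2) (u : E2 → ℝ) : ℝ := ∫ x in Ω, ‖gradient u x‖ ^ 2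

/-- `∫_Ω |u|^p` (p-th power of the L^p norm). -/
def lpPow (Ω : Set E2) (p : ℝ) (u : E2 → ℝ) : ℝ := ∫ x in Ω, |u x| ^ p

/-- Squared L² norm (the mass) of `u` on `Ω`. -/
def mass (Ω : Set E2) (u : E2 → ℝ) : ℝ := ∫ x in Ω, (u x) ^ 2

/-- Membership in H¹(Ω). -/
def MemH1 (Ω : Set E2) (u : E2 → ℝ) : Prop :=
  DifferentiableOn ℝ u Ω ∧ MemLp u 2 (volume.restrict Ω) ∧
    MemLp (fun x => gradient u x) 2 (volume.restrict Ω)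

/-- NLS energy functional `E_p(u,Ω)`. -/
def energy (Ω : Set E2) (p : ℝ) (u : E2 → ℝ) : ℝ :=
  (1 / 2) * grad2 Ω u - (1 / p) * lpPow Ω p u

/-- NLS action functional `J_p(u,λ,Ω)`. -/
def action (Ω : Set E2) (p lam : ℝ) (u : E2 → ℝ) : ℝ :=
  energy Ω p u + (lam / 2) * mass Ω u

/-- The Nehari manifold `N_p(λ,Ω)`. -/
def Nehari (Ω : Set E2) (p lam : ℝ) (u : E2 → ℝ) : Prop :=
  MemH1 Ω u ∧ u ≠ 0 ∧ grad2 Ω u + lam * mass Ω u = lpPow Ω p u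

/-- Energy ground state level `ℰ_p(μ,Ω)`. -/
def energyLevel (Ω : Set E2) (p μ : ℝ) : ℝ :=
  sInf {c | ∃ u, MemH1 Ω u ∧ mass Ω u = μ ∧ c = energy Ω p u}

/-- Action ground state level `𝒥_p(λ,Ω)`. -/
def actionLevel (Ω : Set E2) (p lam : ℝ) : ℝ :=
  sInf {c | ∃ u, Nehari Ω p lam u ∧ c = action Ω p lam u}

/-- `u` is an energy ground state with mass `μ`. -/
def EnergyGS (Ω : Set E2) (p μ : ℝ) (u : E2 → ℝ) : Prop :=
  MemH1 Ω u ∧ mass Ω u = μ ∧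
    ∀ v, MemH1 Ω v → mass Ω v = μ → energy Ω p u ≤ energy Ω p v

/-- `u` is an action ground state at frequency `lam`. -/
def ActionGS (Ω : Set E2) (p lam : ℝ) (u : E2 → ℝ) : Prop :=
  Nehari Ω p lam u ∧ ∀ v, Nehari Ω p lam v → action Ω p lam u ≤ action Ω p lam v

/-- The planar sector `Σ_α` of amplitude `α`. -/
def sector (α : ℝ) : Set E2 :=
  {x | ∃ t θ : ℝ, 0 < t ∧ θ ∈ Ioo 0 α ∧ x 0 = t * Real.cos θ ∧ x 1 = t * Real.sin θ}

/-- `u` is a radial function. -/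
def Radial (u : E2 → ℝ) : Prop := ∃ f : ℝ → ℝ, ∀ x, u x = f ‖x‖

/-- The H¹(Ω) norm. -/
def h1norm (Ω : Set E2) (u : E2 → ℝ) : ℝ := Real.sqrt (mass Ω u + grad2 Ω u)


section Helpers

open scoped ENNReal NNReal

local notation "⟪" x ", " y "⟫" => @inner ℝ _ _ x y

variable {μ : MeasureTheory.Measure E2}

lemma BL.integrable_inner' {f g : E2 → E2} (hf : MemLp f 2 μ) (hg : MemLp g 2 μ) :
    Integrable (fun x => ⟪f x, g x⟫) μ := by
  have h := MeasureTheory.L2.integrable_inner (𝕜 := ℝ) (hf.toLp f) (hg.toLp g)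
  refine h.congr ?_
  filter_upwards [hf.coeFn_toLp, hg.coeFn_toLp] with x hx hy
  rw [hx, hy]

lemma BL.sq_integrable {f : E2 → E2} (hf : MemLp f 2 μ) :
    Integrable (fun x => ‖f x‖ ^ 2) μ :=
  (BL.integrable_inner' hf hf).congr (Filter.Eventually.of_forall fun x =>
    real_inner_self_eq_norm_sq (f x))

lemma BL.integral_inner_eq {f g : E2 → E2} (hf : MemLp f 2 μ) (hg : MemLp g 2 μ) :
    ∫ x, ⟪f x, g x⟫ ∂μ = ⟪hf.toLp f, hg.toLp g⟫ := by
  rw [MeasureTheory.L2.inner_def]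
  refine (integral_congr_ae ?_).symm
  filter_upwards [hf.coeFn_toLp, hg.coeFn_toLp] with x hx hy
  rw [hx, hy]

lemma BL.integral_norm_sq_eq {f : E2 → E2} (hf : MemLp f 2 μ) :
    ∫ x, ‖f x‖ ^ 2 ∂μ = ‖hf.toLp f‖ ^ 2 := by
  rw [← real_inner_self_eq_norm_sq, ← BL.integral_inner_eq hf hf]
  exact integral_congr_ae (Filter.Eventually.of_forall fun x =>
    (real_inner_self_eq_norm_sq (f x)).symm)

lemma BL.cauchy_schwarz {f g : E2 → E2} (hf : MemLp f 2 μ) (hg : MemLp g 2 μ) :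
    |∫ x, ⟪f x, g x⟫ ∂μ| ≤
      Real.sqrt (∫ x, ‖f x‖ ^ 2 ∂μ) * Real.sqrt (∫ x, ‖g x‖ ^ 2 ∂μ) := by
  rw [BL.integral_inner_eq hf hg, BL.integral_norm_sq_eq hf, BL.integral_norm_sq_eq hg,
    Real.sqrt_sq (norm_nonneg _), Real.sqrt_sq (norm_nonneg _)]
  exact abs_real_inner_le_norm _ _

lemma BL.exists_exhaustion {Ωi : Set E2} (hΩi : IsOpen Ωi) :
    ∃ K : ℕ → Set E2, (∀ m, IsCompact (K m)) ∧ Monotone K ∧ (∀ m, K m ⊆ Ωi) ∧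
      (⋃ m, K m) = Ωi := by
  classical
  refine ⟨fun m => closedBall 0 m ∩ {x | (m : ℝ≥0∞)⁻¹ ≤ EMetric.infEdist x Ωiᶜ},
    fun m => ?_, ?_, fun m x hx => ?_, ?_⟩
  · exact (isCompact_closedBall 0 m).inter_right
      (isClosed_le continuous_const EMetric.continuous_infEdist)
  · intro a b hab x hx
    refine ⟨closedBall_subset_closedBall (by exact_mod_cast hab) hx.1,
      le_trans (ENNReal.inv_le_inv.mpr (by exact_mod_cast hab)) hx.2⟩
  · have hpos : (0 : ℝ≥0∞) < EMetric.infEdist x Ωiᶜ :=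
      lt_of_lt_of_le (ENNReal.inv_pos.mpr (by simp)) hx.2
    have := EMetric.infEdist_pos_iff_notMem_closure.mp hpos
    rw [hΩi.isClosed_compl.closure_eq] at this
    simpa using this
  · apply Set.Subset.antisymm
    · refine Set.iUnion_subset fun m x hx => ?_
      have hpos : (0 : ℝ≥0∞) < EMetric.infEdist x Ωiᶜ :=
        lt_of_lt_of_le (ENNReal.inv_pos.mpr (by simp)) hx.2
      have := EMetric.infEdist_pos_iff_notMem_closure.mp hpos
      rw [hΩi.isClosed_compl.closure_eq] at this
      simpa using this
    · intro x hx
      have hpos : (0 : ℝ≥0∞) < EMetric.infEdist x Ωiᶜ := by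
        refine EMetric.infEdist_pos_iff_notMem_closure.mpr ?_
        rw [hΩi.isClosed_compl.closure_eq]
        simpa using hx
      obtain ⟨n, hn⟩ := ENNReal.exists_inv_nat_lt hpos.ne'
      refine Set.mem_iUnion.2 ⟨max n ⌈‖x‖⌉₊, ?_, ?_⟩
      · simp only [mem_closedBall, dist_zero_right]
        calc ‖x‖ ≤ (⌈‖x‖⌉₊ : ℝ) := Nat.le_ceil _
          _ ≤ ((max n ⌈‖x‖⌉₊ : ℕ) : ℝ) := by exact_mod_cast le_max_right _ _
      · calc ((max n ⌈‖x‖⌉₊ : ℕ) : ℝ≥0∞)⁻¹ ≤ ((n : ℕ) : ℝ≥0∞)⁻¹ :=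
            ENNReal.inv_le_inv.mpr (by exact_mod_cast le_max_left _ _)
          _ ≤ EMetric.infEdist x Ωiᶜ := hn.le

lemma BL.exists_compact_close {Ωi : Set E2} (hΩi : IsOpen Ωi) (φ : E2 → ℝ)
    (hint : IntegrableOn φ Ωi) {δ : ℝ} (hδ : 0 < δ) :
    ∃ K, IsCompact K ∧ K ⊆ Ωi ∧ (∫ x in Ωi, φ x) - (∫ x in K, φ x) ≤ δ := by
  obtain ⟨K, hKc, hKmono, hKsub, hKU⟩ := BL.exists_exhaustion hΩi
  have hT : Tendsto (fun m => ∫ x in K m, φ x) atTop (nhds (∫ x in Ωi, φ x)) := by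
    have := tendsto_setIntegral_of_monotone (fun m => (hKc m).measurableSet) hKmono
      (by rw [hKU]; exact hint)
    rwa [hKU] at this
  obtain ⟨N, hN⟩ := Metric.tendsto_atTop.mp hT δ hδ
  have := hN N le_rfl
  rw [Real.dist_eq, abs_lt] at this
  exact ⟨K N, hKc N, hKsub N, by linarith [this.1]⟩

lemma BL.exists_approx {Ωi : Set E2} (hΩi : IsOpen Ωi) (f : E2 → E2)
    (hf : MemLp f 2 (volume.restrict Ωi)) {δ : ℝ} (hδ : 0 < δ) :
    ∃ w : E2 → E2, Continuous w ∧ HasCompactSupport w ∧ tsupport w ⊆ Ωi ∧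
      MemLp w 2 (volume.restrict Ωi) ∧ ∫ x in Ωi, ‖f x - w x‖ ^ 2 ≤ δ := by
  classical
  have hmeas : MeasurableSet Ωi := hΩi.measurableSet
  have hftilde : MemLp (Ωi.indicator f) 2 volume :=
    (memLp_indicator_iff_restrict hmeas).2 hf
  have hsq8 : (0:ℝ) < δ / 8 := by linarith
  have hsqrtpos : 0 < Real.sqrt (δ / 8) := Real.sqrt_pos.mpr hsq8
  obtain ⟨g, g_hcs, hg_close, g_cont, g_mem⟩ :=
    hftilde.exists_hasCompactSupport_eLpNorm_sub_le (by norm_num : (2 : ℝ≥0∞) ≠ ∞)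
      (ε := ENNReal.ofReal (Real.sqrt (δ / 8)))
      (ENNReal.ofReal_pos.mpr hsqrtpos).ne'
  -- integral form of the approximation
  have hsub_mem : MemLp (Ωi.indicator f - g) 2 volume := hftilde.sub g_mem
  have hI2 : ∫ x, ‖Ωi.indicator f x - g x‖ ^ 2 ≤ δ / 8 := by
    have h1 : ∫ x, ‖(Ωi.indicator f - g) x‖ ^ 2 = ‖hsub_mem.toLp _‖ ^ 2 :=
      BL.integral_norm_sq_eq hsub_mem
    have h2 : ‖hsub_mem.toLp _‖ ≤ Real.sqrt (δ / 8) := by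
      rw [Lp.norm_toLp]
      exact ENNReal.toReal_le_of_le_ofReal (Real.sqrt_nonneg _) hg_close
    calc ∫ x, ‖Ωi.indicator f x - g x‖ ^ 2 = ‖hsub_mem.toLp _‖ ^ 2 := h1
      _ ≤ Real.sqrt (δ / 8) ^ 2 := pow_le_pow_left₀ (norm_nonneg _) h2 2
      _ = δ / 8 := Real.sq_sqrt hsq8.le
  -- compact truncation
  obtain ⟨K, hKc, hKsub, hKclose⟩ := BL.exists_compact_close hΩi (fun x => ‖f x‖ ^ 2)
    (BL.sq_integrable hf) hsq8
  have htail : ∫ x in Ωi \ K, ‖f x‖ ^ 2 ≤ δ / 8 := by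
    rw [integral_diff hKc.measurableSet (BL.sq_integrable hf) hKsub]
    exact hKclose
  -- cutoff function
  obtain ⟨k, k_comp, k_closed, hKk, hkΩ⟩ := exists_compact_closed_between hKc hΩi hKsub
  obtain ⟨χ, hχ1, hχ0, hχcs, hχrange⟩ := exists_continuous_one_zero_of_isCompact hKc
    isOpen_interior.isClosed_compl (disjoint_compl_right_iff_subset.mpr hKk)
  have hχk : tsupport (⇑χ) ⊆ k := by
    have hsupp : Function.support (⇑χ) ⊆ interior k := by
      intro x hx
      by_contra hxk
      exact hx (hχ0 hxk)
    exact (closure_mono hsupp).trans (closure_minimal interior_subset k_closed)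
  set w : E2 → E2 := ⇑χ • g with hw_def
  have hw_pt : ∀ x, w x = χ x • g x := fun x => rfl
  have w_cont : Continuous w := χ.continuous.smul g_cont
  have w_hcs : HasCompactSupport w := hχcs.smul_right
  have w_tsupp : tsupport w ⊆ Ωi := (tsupport_smul_subset_left (⇑χ) g).trans (hχk.trans hkΩ)
  have w_mem : MemLp w 2 (volume.restrict Ωi) :=
    (w_cont.memLp_of_hasCompactSupport w_hcs).mono_measure Measure.restrict_le_self
  refine ⟨w, w_cont, w_hcs, w_tsupp, w_mem, ?_⟩
  -- pointwise bound
  have hpt : ∀ x ∈ Ωi, ‖f x - w x‖ ^ 2 ≤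
      2 * (Ωi \ K).indicator (fun y => ‖f y‖ ^ 2) x + 2 * ‖Ωi.indicator f x - g x‖ ^ 2 := by
    intro x hx
    have hind : Ωi.indicator f x = f x := Set.indicator_of_mem hx f
    have h01 := hχrange x
    have key : ‖f x - w x‖ ≤ (1 - χ x) * ‖f x‖ + χ x * ‖f x - g x‖ := by
      have hdec : f x - χ x • g x = (1 - χ x) • f x + χ x • (f x - g x) := by
        rw [sub_smul, smul_sub, one_smul]; abel
      rw [hw_pt, hdec]
      refine (norm_add_le _ _).trans ?_
      rw [norm_smul, norm_smul, Real.norm_eq_abs, Real.norm_eq_abs,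
        abs_of_nonneg (by linarith [h01.2]), abs_of_nonneg h01.1]
    by_cases hxK : x ∈ K
    · have hx1 : χ x = 1 := hχ1 hxK
      have key2 : ‖f x - w x‖ ≤ ‖f x - g x‖ := by
        rw [hx1] at key; simpa using key
      have h3 : ‖f x - w x‖ ^ 2 ≤ ‖f x - g x‖ ^ 2 := pow_le_pow_left₀ (norm_nonneg _) key2 2
      have hxd : x ∉ Ωi \ K := fun h => h.2 hxK
      rw [Set.indicator_of_notMem hxd, hind]
      nlinarith [norm_nonneg (f x - g x)]
    · have hxd : x ∈ Ωi \ K := ⟨hx, hxK⟩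
      rw [Set.indicator_of_mem hxd, hind]
      have key2 : ‖f x - w x‖ ≤ ‖f x‖ + ‖f x - g x‖ := by
        nlinarith [h01.1, h01.2, norm_nonneg (f x), norm_nonneg (f x - g x)]
      have h3 : ‖f x - w x‖ ^ 2 ≤ (‖f x‖ + ‖f x - g x‖) ^ 2 :=
        pow_le_pow_left₀ (norm_nonneg _) key2 2
      nlinarith [sq_nonneg (‖f x‖ - ‖f x - g x‖)]
  -- integrate the pointwise bound
  have int_lhs : Integrable (fun x => ‖f x - w x‖ ^ 2) (volume.restrict Ωi) :=
    BL.sq_integrable (hf.sub w_mem)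
  have int_ind : Integrable ((Ωi \ K).indicator (fun y => ‖f y‖ ^ 2)) (volume.restrict Ωi) :=
    (BL.sq_integrable hf).indicator (hmeas.diff hKc.measurableSet)
  have int_sq2 : Integrable (fun x => ‖Ωi.indicator f x - g x‖ ^ 2) (volume.restrict Ωi) :=
    BL.sq_integrable (hsub_mem.mono_measure Measure.restrict_le_self)
  have hstep : ∫ x in Ωi, ‖f x - w x‖ ^ 2 ≤
      ∫ x in Ωi, (2 * (Ωi \ K).indicator (fun y => ‖f y‖ ^ 2) x +
        2 * ‖Ωi.indicator f x - g x‖ ^ 2) := by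
    exact setIntegral_mono_on int_lhs ((int_ind.const_mul 2).add (int_sq2.const_mul 2))
      hmeas hpt
  have hsplit : ∫ x in Ωi, (2 * (Ωi \ K).indicator (fun y => ‖f y‖ ^ 2) x +
      2 * ‖Ωi.indicator f x - g x‖ ^ 2) =
      2 * (∫ x in Ωi, (Ωi \ K).indicator (fun y => ‖f y‖ ^ 2) x) +
      2 * ∫ x in Ωi, ‖Ωi.indicator f x - g x‖ ^ 2 := by
    rw [integral_add (int_ind.const_mul 2) (int_sq2.const_mul 2),
      integral_const_mul, integral_const_mul]
  have hind_int : ∫ x in Ωi, (Ωi \ K).indicator (fun y => ‖f y‖ ^ 2) x ≤ δ / 8 := by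
    rw [setIntegral_indicator (hmeas.diff hKc.measurableSet),
      Set.inter_eq_self_of_subset_right Set.diff_subset]
    exact htail
  have hsq2_int : ∫ x in Ωi, ‖Ωi.indicator f x - g x‖ ^ 2 ≤ δ / 8 := by
    refine le_trans (setIntegral_le_integral (BL.sq_integrable hsub_mem)
      (Filter.Eventually.of_forall fun x => by positivity)) hI2
  calc ∫ x in Ωi, ‖f x - w x‖ ^ 2 ≤ _ := hstep
    _ = _ := hsplit
    _ ≤ 2 * (δ / 8) + 2 * (δ / 8) := by
        gcongr
    _ ≤ δ := by linarith

end Helpers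

/-- splitting of the gradient terms on varying domains. -/
theorem brezis_lieb_gradients_varying_domains (Ω : ℕ → Set E2) (Ωi : Set E2)
    (hΩn : ∀ n, IsOpen (Ω n)) (hΩi : IsOpen Ωi) (hsub : ∀ n, Ω n ⊆ Ωi)
    (hinc : ∀ K : Set E2, IsCompact K → K ⊆ Ωi → ∃ N, ∀ n ≥ N, K ⊆ Ω n)
    (u : ℕ → E2 → ℝ) (hmem : ∀ n, MemH1 (Ω n) (u n))
    (hbdd : ∃ C, ∀ n, h1norm (Ω n) (u n) ≤ C)
    (v : E2 → ℝ) (hv : MemH1 Ωi v)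
    (hstrong : ∀ K : Set E2, IsCompact K → K ⊆ Ωi →
      Tendsto (fun n => ∫ x in K, (u n x - v x) ^ 2) atTop (nhds 0))
    (hweak : ∀ w : E2 → E2, Continuous w → HasCompactSupport w → tsupport w ⊆ Ωi →
      Tendsto (fun n => ∫ x in Ω n, (inner ℝ (gradient (u n) x) (w x) : ℝ)) atTop
        (nhds (∫ x in Ωi, (inner ℝ (gradient v x) (w x) : ℝ)))) :
    Tendsto (fun n => grad2 (Ω n) (u n) -
        grad2 (Ω n) (fun x => u n x - v x) - grad2 Ωi v) atTop (nhds 0) := by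
  classical
  obtain ⟨C, hC⟩ := hbdd
  have hgv : MemLp (fun x => gradient v x) 2 (volume.restrict Ωi) := hv.2.2
  have hgvn : ∀ n, MemLp (fun x => gradient v x) 2 (volume.restrict (Ω n)) :=
    fun n => hgv.mono_measure (Measure.restrict_mono (hsub n) le_rfl)
  have hgn : ∀ n, MemLp (fun x => gradient (u n) x) 2 (volume.restrict (Ω n)) :=
    fun n => (hmem n).2.2
  have hC0 : 0 ≤ C := le_trans (Real.sqrt_nonneg _) (hC 0)
  have hJ0 : (0:ℝ) ≤ ∫ x in Ωi, ‖gradient v x‖ ^ 2 :=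
    integral_nonneg fun x => by positivity
  have hgrad_le : ∀ n, ∫ x in Ω n, ‖gradient (u n) x‖ ^ 2 ≤ C ^ 2 := by
    intro n
    have hm : 0 ≤ mass (Ω n) (u n) := integral_nonneg fun x => sq_nonneg _
    have hg0 : (0:ℝ) ≤ ∫ x in Ω n, ‖gradient (u n) x‖ ^ 2 :=
      integral_nonneg fun x => by positivity
    have h := hC n
    simp only [h1norm, grad2] at h
    have hsq := Real.sq_sqrt (by linarith :
      (0:ℝ) ≤ mass (Ω n) (u n) + ∫ x in Ω n, ‖gradient (u n) x‖ ^ 2)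
    nlinarith [Real.sqrt_nonneg (mass (Ω n) (u n) + ∫ x in Ω n, ‖gradient (u n) x‖ ^ 2)]
  -- Step A : algebraic identity
  have stepA : ∀ n, grad2 (Ω n) (u n) - grad2 (Ω n) (fun x => u n x - v x) - grad2 Ωi v
      = 2 * (∫ x in Ω n, (inner ℝ (gradient (u n) x) (gradient v x) : ℝ))
        - (∫ x in Ω n, ‖gradient v x‖ ^ 2) - (∫ x in Ωi, ‖gradient v x‖ ^ 2) := by
    intro n
    have hgradeq : ∀ x ∈ Ω n,
        gradient (fun y => u n y - v y) x = gradient (u n) x - gradient v x := by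
      intro x hx
      have hdu : DifferentiableAt ℝ (u n) x :=
        (hmem n).1.differentiableAt ((hΩn n).mem_nhds hx)
      have hdv : DifferentiableAt ℝ v x :=
        hv.1.differentiableAt (hΩi.mem_nhds (hsub n hx))
      have h1 : HasFDerivAt (fun y => u n y - v y)
          ((InnerProductSpace.toDual ℝ E2) (gradient (u n) x - gradient v x)) x := by
        rw [map_sub]
        exact hdu.hasGradientAt.hasFDerivAt.sub hdv.hasGradientAt.hasFDerivAt
      simpa [gradient] using h1.hasGradientAt.gradient
    have hcongr : ∫ x in Ω n, ‖gradient (fun y => u n y - v y) x‖ ^ 2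
        = ∫ x in Ω n, ‖gradient (u n) x - gradient v x‖ ^ 2 :=
      setIntegral_congr_fun (hΩn n).measurableSet fun x hx => by rw [hgradeq x hx]
    have hintA := BL.sq_integrable (hgn n)
    have hintB := BL.integrable_inner' (hgn n) (hgvn n)
    have hintC := BL.sq_integrable (hgvn n)
    have hexp : ∫ x in Ω n, ‖gradient (u n) x - gradient v x‖ ^ 2
        = (∫ x in Ω n, ‖gradient (u n) x‖ ^ 2)
          - 2 * (∫ x in Ω n, (inner ℝ (gradient (u n) x) (gradient v x) : ℝ))
          + ∫ x in Ω n, ‖gradient v x‖ ^ 2 := by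
      have hpt : ∀ x, ‖gradient (u n) x - gradient v x‖ ^ 2
          = (‖gradient (u n) x‖ ^ 2
            - 2 * (inner ℝ (gradient (u n) x) (gradient v x) : ℝ)) + ‖gradient v x‖ ^ 2 := by
        intro x; rw [norm_sub_sq_real]
      simp_rw [hpt]
      have e1 : Integrable (fun x => ‖gradient (u n) x‖ ^ 2
          - 2 * (inner ℝ (gradient (u n) x) (gradient v x) : ℝ)) (volume.restrict (Ω n)) :=
        hintA.sub (hintB.const_mul 2)
      have h2 : ∫ x in Ω n, (‖gradient (u n) x‖ ^ 2
            - 2 * (inner ℝ (gradient (u n) x) (gradient v x) : ℝ) + ‖gradient v x‖ ^ 2)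
          = (∫ x in Ω n, (‖gradient (u n) x‖ ^ 2
            - 2 * (inner ℝ (gradient (u n) x) (gradient v x) : ℝ)))
            + ∫ x in Ω n, ‖gradient v x‖ ^ 2 := integral_add e1 hintC
      have h3 : ∫ x in Ω n, (‖gradient (u n) x‖ ^ 2
            - 2 * (inner ℝ (gradient (u n) x) (gradient v x) : ℝ))
          = (∫ x in Ω n, ‖gradient (u n) x‖ ^ 2)
            - ∫ x in Ω n, 2 * (inner ℝ (gradient (u n) x) (gradient v x) : ℝ) :=
        integral_sub hintA (hintB.const_mul 2)
      have h4 : ∫ x in Ω n, (2:ℝ) * (inner ℝ (gradient (u n) x) (gradient v x) : ℝ)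
          = 2 * ∫ x in Ω n, (inner ℝ (gradient (u n) x) (gradient v x) : ℝ) :=
        integral_const_mul 2 _
      rw [h2, h3, h4]
    simp only [grad2]
    rw [hcongr, hexp]
    ring
  -- Step B : tendsto of ∫_{Ω n} ‖∇v‖²
  have hJn_tendsto : Tendsto (fun n => ∫ x in Ω n, ‖gradient v x‖ ^ 2) atTop
      (nhds (∫ x in Ωi, ‖gradient v x‖ ^ 2)) := by
    rw [Metric.tendsto_atTop]
    intro ε hε
    obtain ⟨K, hKc, hKsub, hKclose⟩ := BL.exists_compact_close hΩi
      (fun x => ‖gradient v x‖ ^ 2) (BL.sq_integrable hgv) (half_pos hε)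
    obtain ⟨N, hN⟩ := hinc K hKc hKsub
    refine ⟨N, fun n hn => ?_⟩
    have h1 : ∫ x in Ω n, ‖gradient v x‖ ^ 2 ≤ ∫ x in Ωi, ‖gradient v x‖ ^ 2 :=
      setIntegral_mono_set (BL.sq_integrable hgv)
        (Filter.Eventually.of_forall fun x => by positivity)
        ((hsub n).eventuallyLE)
    have h2 : ∫ x in K, ‖gradient v x‖ ^ 2 ≤ ∫ x in Ω n, ‖gradient v x‖ ^ 2 :=
      setIntegral_mono_set (BL.sq_integrable (hgvn n))
        (Filter.Eventually.of_forall fun x => by positivity)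
        ((hN n hn).eventuallyLE)
    rw [Real.dist_eq, abs_lt]
    constructor <;> linarith
  -- Step C : tendsto of the mixed term
  have hI_tendsto : Tendsto
      (fun n => ∫ x in Ω n, (inner ℝ (gradient (u n) x) (gradient v x) : ℝ)) atTop
      (nhds (∫ x in Ωi, ‖gradient v x‖ ^ 2)) := by
    rw [Metric.tendsto_atTop]
    intro ε hε
    set S := Real.sqrt (∫ x in Ωi, ‖gradient v x‖ ^ 2) with hS_def
    have hS0 : 0 ≤ S := Real.sqrt_nonneg _
    have hden : (0:ℝ) < C + S + 1 := by linarith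
    set D : ℝ := ε / (2 * (C + S + 1)) with hD_def
    have hD : 0 < D := div_pos hε (by linarith)
    obtain ⟨w, w_cont, w_hcs, w_tsupp, w_mem, w_close⟩ :=
      BL.exists_approx hΩi (fun x => gradient v x) hgv (by positivity : (0:ℝ) < D ^ 2)
    have w_memn : ∀ n, MemLp w 2 (volume.restrict (Ω n)) := fun n =>
      (w_cont.memLp_of_hasCompactSupport w_hcs).mono_measure Measure.restrict_le_self
    have hgvw_mem : MemLp (fun x => gradient v x - w x) 2 (volume.restrict Ωi) :=
      hgv.sub w_mem
    have hgvw_memn : ∀ n, MemLp (fun x => gradient v x - w x) 2 (volume.restrict (Ω n)) :=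
      fun n => hgvw_mem.mono_measure (Measure.restrict_mono (hsub n) le_rfl)
    have hsqrt_close : Real.sqrt (∫ x in Ωi, ‖gradient v x - w x‖ ^ 2) ≤ D :=
      le_trans (Real.sqrt_le_sqrt w_close) (le_of_eq (Real.sqrt_sq hD.le))
    have hT1 : ∀ n, |∫ x in Ω n, (inner ℝ (gradient (u n) x) (gradient v x - w x) : ℝ)| ≤ C * D := by
      intro n
      refine le_trans (BL.cauchy_schwarz (hgn n) (hgvw_memn n)) ?_
      have h1 : Real.sqrt (∫ x in Ω n, ‖gradient (u n) x‖ ^ 2) ≤ C :=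
        le_trans (Real.sqrt_le_sqrt (hgrad_le n)) (le_of_eq (Real.sqrt_sq hC0))
      have h2 : Real.sqrt (∫ x in Ω n, ‖gradient v x - w x‖ ^ 2) ≤ D := by
        refine le_trans (Real.sqrt_le_sqrt ?_) hsqrt_close
        exact setIntegral_mono_set (BL.sq_integrable hgvw_mem)
          (Filter.Eventually.of_forall fun x => by positivity)
          ((hsub n).eventuallyLE)
      exact mul_le_mul h1 h2 (Real.sqrt_nonneg _) hC0
    have hT3 : |∫ x in Ωi, (inner ℝ (gradient v x) (w x - gradient v x) : ℝ)| ≤ S * D := by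
      refine le_trans (BL.cauchy_schwarz hgv (w_mem.sub hgv)) ?_
      have heq : ∫ x in Ωi, ‖w x - gradient v x‖ ^ 2
          = ∫ x in Ωi, ‖gradient v x - w x‖ ^ 2 := by
        refine integral_congr_ae (Filter.Eventually.of_forall fun x => ?_)
        dsimp only; rw [norm_sub_rev]
      rw [heq]
      exact mul_le_mul le_rfl hsqrt_close (Real.sqrt_nonneg _) hS0
    have hsplitI : ∀ n, (∫ x in Ω n, (inner ℝ (gradient (u n) x) (gradient v x) : ℝ))
        = (∫ x in Ω n, (inner ℝ (gradient (u n) x) (gradient v x - w x) : ℝ))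
          + ∫ x in Ω n, (inner ℝ (gradient (u n) x) (w x) : ℝ) := by
      intro n
      rw [← integral_add (BL.integrable_inner' (hgn n) (hgvw_memn n))
        (BL.integrable_inner' (hgn n) (w_memn n))]
      refine integral_congr_ae (Filter.Eventually.of_forall fun x => ?_)
      dsimp only; rw [← inner_add_right, sub_add_cancel]
    have hsplitJ : (∫ x in Ωi, (inner ℝ (gradient v x) (w x - gradient v x) : ℝ))
        = (∫ x in Ωi, (inner ℝ (gradient v x) (w x) : ℝ))
          - ∫ x in Ωi, ‖gradient v x‖ ^ 2 := by
      rw [← integral_sub (BL.integrable_inner' hgv w_mem) (BL.sq_integrable hgv)]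
      refine integral_congr_ae (Filter.Eventually.of_forall fun x => ?_)
      dsimp only; rw [inner_sub_right, real_inner_self_eq_norm_sq]
    obtain ⟨N, hN⟩ := Metric.tendsto_atTop.mp (hweak w w_cont w_hcs w_tsupp) (ε/2)
      (half_pos hε)
    refine ⟨N, fun n hn => ?_⟩
    have hT2 := hN n hn
    rw [Real.dist_eq] at hT2
    rw [Real.dist_eq]
    have key : (∫ x in Ω n, (inner ℝ (gradient (u n) x) (gradient v x) : ℝ))
        - (∫ x in Ωi, ‖gradient v x‖ ^ 2)
        = (∫ x in Ω n, (inner ℝ (gradient (u n) x) (gradient v x - w x) : ℝ))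
          + ((∫ x in Ω n, (inner ℝ (gradient (u n) x) (w x) : ℝ))
            - ∫ x in Ωi, (inner ℝ (gradient v x) (w x) : ℝ))
          + (∫ x in Ωi, (inner ℝ (gradient v x) (w x - gradient v x) : ℝ)) := by
      rw [hsplitI n, hsplitJ]; ring
    rw [key]
    have habs : |(∫ x in Ω n, (inner ℝ (gradient (u n) x) (gradient v x - w x) : ℝ))
          + ((∫ x in Ω n, (inner ℝ (gradient (u n) x) (w x) : ℝ))
            - ∫ x in Ωi, (inner ℝ (gradient v x) (w x) : ℝ))
          + (∫ x in Ωi, (inner ℝ (gradient v x) (w x - gradient v x) : ℝ))|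
        ≤ |∫ x in Ω n, (inner ℝ (gradient (u n) x) (gradient v x - w x) : ℝ)|
          + |(∫ x in Ω n, (inner ℝ (gradient (u n) x) (w x) : ℝ))
            - ∫ x in Ωi, (inner ℝ (gradient v x) (w x) : ℝ)|
          + |∫ x in Ωi, (inner ℝ (gradient v x) (w x - gradient v x) : ℝ)| :=
      (abs_add_le _ _).trans (add_le_add (abs_add_le _ _) le_rfl)
    have hCS : C * D + S * D ≤ ε / 2 := by
      have h1 : (C + S) * D ≤ (C + S + 1) * D := by nlinarith [hD.le]
      have h2 : (C + S + 1) * D = ε / 2 := by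
        rw [hD_def]; field_simp
      nlinarith
    calc |(∫ x in Ω n, (inner ℝ (gradient (u n) x) (gradient v x - w x) : ℝ))
          + ((∫ x in Ω n, (inner ℝ (gradient (u n) x) (w x) : ℝ))
            - ∫ x in Ωi, (inner ℝ (gradient v x) (w x) : ℝ))
          + (∫ x in Ωi, (inner ℝ (gradient v x) (w x - gradient v x) : ℝ))|
        ≤ _ := habs
      _ < C * D + ε / 2 + S * D := by
          have := hT1 n
          linarith [hT3]
      _ ≤ ε := by linarith
  -- assemble
  have main : Tendsto (fun n =>
      2 * (∫ x in Ω n, (inner ℝ (gradient (u n) x) (gradient v x) : ℝ))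
        - (∫ x in Ω n, ‖gradient v x‖ ^ 2) - (∫ x in Ωi, ‖gradient v x‖ ^ 2)) atTop
      (nhds (2 * (∫ x in Ωi, ‖gradient v x‖ ^ 2)
        - (∫ x in Ωi, ‖gradient v x‖ ^ 2) - (∫ x in Ωi, ‖gradient v x‖ ^ 2))) :=
    ((hI_tendsto.const_mul 2).sub hJn_tendsto).sub tendsto_const_nhds
  have h0 : 2 * (∫ x in Ωi, ‖gradient v x‖ ^ 2)
      - (∫ x in Ωi, ‖gradient v x‖ ^ 2) - (∫ x in Ωi, ‖gradient v x‖ ^ 2) = 0 := by ring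
  rw [h0] at main
  exact main.congr fun n => (stepA n).symm
end
end

section
/- Let Ω ⊂ ℝ² be a bounded polygon, p ∈ (2,4), μ > 0, and let u be an energy ground state with mass μ. Assume ℰ_p(μ,Ω) < 0. Then the associated Lagrange multiplier λ_u = (‖u‖^p_{L^p} − ‖∇u‖²_{L²})/μ is strictly positive, and moreover λ_u ≥ (2/p)(μ/|Ω|)^{p/2−1}. -/
open MeasureTheory Set Filter Topology Metric Bornology

noncomputable section

/-- the Lagrange multiplier of an energy ground state is strictly
positive, with the explicit lower bound `(2/p)(μ/|Ω|)^{p/2-1}`. -/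
theorem multiplier_positive_lower_bound (Ω : Set E2) (hΩ : IsOpen Ω) (hb : IsBounded Ω)
    (hvol : 0 < (volume Ω).toReal) (p μ : ℝ) (hp : p ∈ Ioo 2 4) (hμ : 0 < μ)
    (u : E2 → ℝ) (hgs : EnergyGS Ω p μ u) (hneg : energyLevel Ω p μ < 0) :
    0 < (lpPow Ω p u - grad2 Ω u) / μ ∧
      (2 / p) * (μ / (volume Ω).toReal) ^ (p / 2 - 1) ≤
        (lpPow Ω p u - grad2 Ω u) / μ := by
  obtain ⟨hp2, hp4⟩ := hp
  have hp0 : (0:ℝ) < p := by linarith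
  set V := (volume Ω).toReal with hVdef
  have hμV : 0 < μ / V := div_pos hμ hvol
  set c := Real.sqrt (μ / V) with hc
  have hc0 : 0 ≤ c := Real.sqrt_nonneg _
  have hfin : volume Ω < ⊤ := hb.measure_lt_top
  haveI := Fact.mk hfin
  -- constant test function
  have hmem : MemH1 Ω (fun _ => c) := by
    refine ⟨differentiableOn_const c, memLp_const _, ?_⟩
    have : (fun x : E2 => gradient (fun _ => c) x) = fun _ => (0 : E2) := by
      funext x; exact gradient_const x c
    rw [this]; exact memLp_const _
  have hmass : mass Ω (fun _ => c) = μ := by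
    rw [mass, setIntegral_const, smul_eq_mul, Real.sq_sqrt hμV.le]
    field_simp
    rfl
  have hcp : c ^ p = (μ / V) ^ (p / 2) := by
    rw [hc, Real.sqrt_eq_rpow, ← Real.rpow_mul hμV.le]
    congr 1
    ring
  have hlpconst : lpPow Ω p (fun _ => c) = V * (μ / V) ^ (p / 2) := by
    rw [lpPow]
    simp only [abs_of_nonneg hc0]
    rw [setIntegral_const, smul_eq_mul, hcp]
    rfl
  have henergyconst : energy Ω p (fun _ => c) = -(1/p) * (V * (μ / V) ^ (p / 2)) := by
    rw [energy, hlpconst]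
    have : grad2 Ω (fun _ => c) = 0 := by
      rw [grad2]
      have : (fun x : E2 => ‖gradient (fun _ => c) x‖ ^ 2) = fun _ => (0:ℝ) := by
        funext x; rw [show (fun _ : E2 => c) = Function.const E2 c from rfl, gradient_const]; simp
      rw [this]; simp
    rw [this]; ring
  have hE : energy Ω p u ≤ -(1/p) * (V * (μ / V) ^ (p / 2)) := by
    rw [← henergyconst]; exact hgs.2.2 _ hmem hmass
  have hL : 0 ≤ lpPow Ω p u := by
    apply integral_nonneg
    intro x
    exact Real.rpow_nonneg (abs_nonneg _) _
  have hG : grad2 Ω u = 2 * energy Ω p u + (2/p) * lpPow Ω p u := by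
    rw [energy]; field_simp; ring
  have hkey : (2 / p) * (μ / V) ^ (p / 2 - 1) * μ ≤ lpPow Ω p u - grad2 Ω u := by
    have h1 : (μ / V) ^ (p / 2 - 1) * μ = (μ / V) ^ (p / 2) * V := by
      rw [Real.rpow_sub hμV, Real.rpow_one]
      field_simp
    have h2 : (1 - 2/p) * lpPow Ω p u ≥ 0 := by
      apply mul_nonneg _ hL
      have : 2/p < 1 := by rw [div_lt_one hp0]; linarith
      linarith
    rw [mul_assoc, h1]
    have e1 : 2/p * ((μ/V) ^ (p/2) * V) = -2 * (-(1/p) * (V * (μ/V) ^ (p/2))) := by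
      ring
    rw [e1]
    linarith [hE, h2, hG]
  have hpos : 0 < (2 / p) * (μ / V) ^ (p / 2 - 1) :=
    mul_pos (by positivity) (Real.rpow_pos_of_pos hμV _)
  constructor
  · have := hkey
    have h2 : 0 < (2 / p) * (μ / V) ^ (p / 2 - 1) * μ := mul_pos hpos hμ
    exact div_pos (lt_of_lt_of_le h2 hkey) hμ
  · rw [le_div_iff₀ hμ]; exact hkey
end
end
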